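/- arXiv:1011.3900 — 2 statements merged into one kernel-verified Lean document; each statement's English description precedes it below -/
import Mathlib

section
/- The antisymmetric tensor product of operators is associative: for linear operators Xⱼ on Hⱼ (j = 1, 2, 3), the operator (X₁ ⊗̂ X₂) ⊗̂ X₃ on (H₁ ⊗ H₂) ⊗ H₃ — formed using the composite parity θ₁₂ = θ₁ ⊗ θ₂ on H₁ ⊗ H₂ — corresponds to the operator X₁ ⊗̂ (X₂ ⊗̂ X₃) on H₁ ⊗ (H₂ ⊗ H₃) under the canonical associativity isomorphism of tensor products; that is, conjugating (X₁ ⊗̂ X₂) ⊗̂ X₃ by the associator yields X₁ ⊗̂ (X₂ ⊗̂ X₃). -/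
/-- Even part `X₊ = (X + θXθ)/2` of an operator with respect to a parity `θ`. -/
noncomputable def evenPart {K : Type*} [AddCommGroup K] [Module ℂ K]
    (θ X : K →ₗ[ℂ] K) : K →ₗ[ℂ] K :=
  (2⁻¹ : ℂ) • (X + θ ∘ₗ X ∘ₗ θ)

/-- Odd part `X₋ = (X − θXθ)/2` of an operator with respect to a parity `θ`. -/
noncomputable def oddPart {K : Type*} [AddCommGroup K] [Module ℂ K]
    (θ X : K →ₗ[ℂ] K) : K →ₗ[ℂ] K :=
  (2⁻¹ : ℂ) • (X - θ ∘ₗ X ∘ₗ θ)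

/-- Antisymmetric tensor product `X ⊗̂ Y = X ⊗ Y₊ + (Xθ) ⊗ Y₋` of operators. -/
noncomputable def hatTensor {H K : Type*} [AddCommGroup H] [Module ℂ H]
    [AddCommGroup K] [Module ℂ K]
    (θ : H →ₗ[ℂ] H) (θ' : K →ₗ[ℂ] K) (X : H →ₗ[ℂ] H) (Y : K →ₗ[ℂ] K) :
    TensorProduct ℂ H K →ₗ[ℂ] TensorProduct ℂ H K :=
  TensorProduct.map X (evenPart θ' Y) + TensorProduct.map (X ∘ₗ θ) (oddPart θ' Y)

/-- Associativity of the antisymmetric tensor product of operators: conjugating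
`(X₁ ⊗̂ X₂) ⊗̂ X₃` (formed with the composite parity `θ₁ ⊗ θ₂` on `H₁ ⊗ H₂`) by the
canonical associator of tensor products yields `X₁ ⊗̂ (X₂ ⊗̂ X₃)` (formed with the
composite parity `θ₂ ⊗ θ₃` on `H₂ ⊗ H₃`). -/
theorem hatTensor_assoc
    {H₁ H₂ H₃ : Type*} [AddCommGroup H₁] [Module ℂ H₁] [AddCommGroup H₂] [Module ℂ H₂]
    [AddCommGroup H₃] [Module ℂ H₃]
    (θ₁ : H₁ →ₗ[ℂ] H₁) (θ₂ : H₂ →ₗ[ℂ] H₂) (θ₃ : H₃ →ₗ[ℂ] H₃)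
    (h₁ : θ₁ ∘ₗ θ₁ = LinearMap.id) (h₂ : θ₂ ∘ₗ θ₂ = LinearMap.id)
    (h₃ : θ₃ ∘ₗ θ₃ = LinearMap.id)
    (X₁ : H₁ →ₗ[ℂ] H₁) (X₂ : H₂ →ₗ[ℂ] H₂) (X₃ : H₃ →ₗ[ℂ] H₃) :
    (TensorProduct.assoc ℂ H₁ H₂ H₃).toLinearMap ∘ₗ
        hatTensor (TensorProduct.map θ₁ θ₂) θ₃ (hatTensor θ₁ θ₂ X₁ X₂) X₃ ∘ₗ
        (TensorProduct.assoc ℂ H₁ H₂ H₃).symm.toLinearMap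
      = hatTensor θ₁ (TensorProduct.map θ₂ θ₃) X₁ (hatTensor θ₂ θ₃ X₂ X₃) := by
  have hθ₁ : ∀ x, θ₁ (θ₁ x) = x := fun x => congrFun (congrArg DFunLike.coe h₁) x
  have hθ₂ : ∀ y, θ₂ (θ₂ y) = y := fun y => congrFun (congrArg DFunLike.coe h₂) y
  have hθ₃ : ∀ z, θ₃ (θ₃ z) = z := fun z => congrFun (congrArg DFunLike.coe h₃) z
  ext x y z
  simp only [hatTensor, evenPart, oddPart, LinearMap.comp_apply, LinearMap.add_apply,
    LinearMap.sub_apply, LinearMap.smul_apply, LinearMap.id_apply,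
    TensorProduct.map_tmul, TensorProduct.assoc_tmul, TensorProduct.assoc_symm_tmul,
    LinearEquiv.coe_coe, TensorProduct.AlgebraTensorModule.curry_apply,
    TensorProduct.curry_apply, LinearMap.coe_restrictScalars,
    TensorProduct.tmul_add, TensorProduct.add_tmul, TensorProduct.tmul_sub,
    TensorProduct.sub_tmul, TensorProduct.tmul_smul, TensorProduct.smul_tmul',
    map_add, map_sub, map_smul, hθ₁, hθ₂, hθ₃]
  simp only [← TensorProduct.smul_tmul', TensorProduct.add_tmul, TensorProduct.sub_tmul,
    map_add, map_sub, map_smul, TensorProduct.assoc_tmul]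
  module
end

section
/- Let ξ and V be independent real random variables on a probability space, with ξ Gaussian with mean ξ̄ and variance Σ_ξ ≥ 0, and V standard Gaussian (mean 0, variance 1). Let Y = ξ + V. Then the conditional expectation of ξ given the σ-algebra generated by Y is given almost surely by E[ξ | σ(Y)] = ξ̄ + Σ_ξ (1 + Σ_ξ)⁻¹ (Y − ξ̄). -/
open MeasureTheory ProbabilityTheory
open Real

lemma my_integral_gaussianReal {m : ℝ} {v : NNReal} (hv : v ≠ 0) (f : ℝ → ℝ) :
    ∫ x, f x ∂(gaussianReal m v) = ∫ x, gaussianPDFReal m v x * f x := by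
  rw [gaussianReal_of_var_ne_zero m hv]
  have hd : gaussianPDF m v = fun x => ((Real.toNNReal (gaussianPDFReal m v x) : NNReal) : ENNReal) := rfl
  rw [hd, integral_withDensity_eq_integral_smul ((measurable_gaussianPDFReal m v).real_toNNReal) f]
  refine integral_congr_ae (Filter.Eventually.of_forall fun x => ?_)
  show (gaussianPDFReal m v x).toNNReal • f x = gaussianPDFReal m v x * f x
  rw [NNReal.smul_def, Real.coe_toNNReal _ (gaussianPDFReal_nonneg _ _ _), smul_eq_mul]

lemma my_integrable_gaussianReal_iff {m : ℝ} {v : NNReal} (hv : v ≠ 0) (f : ℝ → ℝ) :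
    Integrable f (gaussianReal m v) ↔ Integrable (fun x => f x * gaussianPDFReal m v x) volume := by
  rw [gaussianReal_of_var_ne_zero m hv, gaussianPDF_def,
    integrable_withDensity_iff (measurable_gaussianPDFReal m v).ennreal_ofReal
      (Filter.Eventually.of_forall fun x => ENNReal.ofReal_lt_top)]
  refine integrable_congr (Filter.Eventually.of_forall fun x => ?_)
  show f x * (ENNReal.ofReal (gaussianPDFReal m v x)).toReal = f x * gaussianPDFReal m v x
  rw [ENNReal.toReal_ofReal (gaussianPDFReal_nonneg _ _ _)]

lemma my_integral_odd (k : ℝ) : ∫ x : ℝ, x * rexp (-k * x ^ 2) = 0 := by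
  have h : (∫ x : ℝ, x * rexp (-k * x ^ 2)) = -∫ x : ℝ, x * rexp (-k * x ^ 2) := by
    conv_lhs => rw [← integral_neg_eq_self (fun x : ℝ => x * rexp (-k * x ^ 2)) volume]
    rw [← integral_neg]
    congr 1; funext x; rw [neg_sq]; ring
  linarith

lemma my_integrable_pdf_mul (m : ℝ) {v : NNReal} (hv : v ≠ 0) :
    Integrable (fun x => x * gaussianPDFReal m v x) volume := by
  have hvp : (0:ℝ) < (v:ℝ) := NNReal.coe_pos.mpr (pos_iff_ne_zero.mpr hv)
  have hb : (0:ℝ) < (2 * (v:ℝ))⁻¹ := by positivity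
  have h1 : Integrable (fun x : ℝ => (x - m) * rexp (-(2*(v:ℝ))⁻¹ * (x - m) ^ 2)) volume :=
    (integrable_mul_exp_neg_mul_sq hb).comp_sub_right m
  have h2 : Integrable (fun x : ℝ => rexp (-(2*(v:ℝ))⁻¹ * (x - m) ^ 2)) volume :=
    (integrable_exp_neg_mul_sq hb).comp_sub_right m
  have h3 := (h1.add (h2.const_mul m)).const_mul (√(2 * π * (v:ℝ)))⁻¹
  refine h3.congr (Filter.Eventually.of_forall fun x => ?_)
  simp only [gaussianPDFReal_def]
  have he : -(x - m) ^ 2 / (2 * (v:ℝ)) = -(2*(v:ℝ))⁻¹ * (x - m) ^ 2 := by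
    field_simp
  rw [he]
  simp only [Pi.add_apply]
  ring

lemma my_integrable_id_gaussianReal (m : ℝ) (v : NNReal) :
    Integrable (fun x => x) (gaussianReal m v) := by
  by_cases hv : v = 0
  · subst hv; rw [gaussianReal_zero_var]
    exact (integrable_const m).congr (ae_eq_dirac (fun x : ℝ => x)).symm
  · rw [my_integrable_gaussianReal_iff hv]
    exact my_integrable_pdf_mul m hv

lemma my_core (m : ℝ) {v : NNReal} (hv : v ≠ 0) (y : ℝ) :
    ∫ x, gaussianPDFReal m v x *
      (gaussianPDFReal 0 1 (y - x) * (m + (v:ℝ) * (1 + (v:ℝ))⁻¹ * (y - m) - x)) = 0 := by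
  have hvp : (0:ℝ) < (v:ℝ) := NNReal.coe_pos.mpr (pos_iff_ne_zero.mpr hv)
  have h1v : (0:ℝ) < 1 + (v:ℝ) := by linarith
  set S : ℝ := (v:ℝ) with hS
  set k : ℝ := (1 + S) / (2 * S) with hk
  set c : ℝ := S * (1 + S)⁻¹ with hc
  set μy : ℝ := m + c * (y - m) with hμy
  set R : ℝ := (√(2 * π * S))⁻¹ * (√(2 * π * ((1:NNReal):ℝ)))⁻¹ * rexp (-(y - m)^2 / (2 * (1 + S))) with hR
  have key : ∀ x : ℝ, gaussianPDFReal m v x *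
      (gaussianPDFReal 0 1 (y - x) * (m + c * (y - m) - x))
      = R * -((x - μy) * rexp (-k * (x - μy) ^ 2)) := by
    intro x
    simp only [gaussianPDFReal_def, hR]
    have hexp : -(x - m)^2 / (2 * S) + -(y - x - 0)^2 / (2 * ((1:NNReal):ℝ))
        = (-k * (x - μy)^2) + -(y - m)^2 / (2 * (1 + S)) := by
      simp only [NNReal.coe_one, hk, hμy, hc]
      field_simp
      ring
    have h2 : rexp (-(x - m)^2 / (2 * S)) * rexp (-(y - x - 0)^2 / (2 * ((1:NNReal):ℝ)))
        = rexp (-k * (x - μy)^2) * rexp (-(y - m)^2 / (2 * (1 + S))) := by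
      rw [← Real.exp_add, ← Real.exp_add, hexp]
    have h3 : m + c * (y - m) - x = -(x - μy) := by rw [hμy]; ring
    calc (√(2 * π * S))⁻¹ * rexp (-(x - m)^2 / (2 * S)) *
          ((√(2 * π * ((1:NNReal):ℝ)))⁻¹ * rexp (-(y - x - 0)^2 / (2 * ((1:NNReal):ℝ))) * (m + c * (y - m) - x))
        = ((√(2 * π * S))⁻¹ * (√(2 * π * ((1:NNReal):ℝ)))⁻¹) *
            (rexp (-(x - m)^2 / (2 * S)) * rexp (-(y - x - 0)^2 / (2 * ((1:NNReal):ℝ)))) * (m + c * (y - m) - x) := by ring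
      _ = ((√(2 * π * S))⁻¹ * (√(2 * π * ((1:NNReal):ℝ)))⁻¹) *
            (rexp (-k * (x - μy)^2) * rexp (-(y - m)^2 / (2 * (1 + S)))) * -(x - μy) := by rw [h2, h3]
      _ = (√(2 * π * S))⁻¹ * (√(2 * π * ((1:NNReal):ℝ)))⁻¹ * rexp (-(y - m)^2 / (2 * (1 + S))) *
            -((x - μy) * rexp (-k * (x - μy)^2)) := by ring
  rw [← hμy] at key
  simp_rw [key]
  rw [integral_const_mul]
  have : (∫ x : ℝ, -((x - μy) * rexp (-k * (x - μy) ^ 2)))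
      = -∫ x : ℝ, (fun u => u * rexp (-k * u ^ 2)) (x - μy) := by
    rw [← integral_neg]
  rw [this, integral_sub_right_eq_self (fun u : ℝ => u * rexp (-k * u ^ 2)) μy, my_integral_odd]
  simp



lemma my_integrable_shear {μ : Measure ℝ} [IsProbabilityMeasure μ] {h r : ℝ → ℝ}
    (hhm : Measurable h) (hh : Integrable h μ) (hrm : Measurable r) (hr : Integrable r volume) :
    Integrable (fun p : ℝ × ℝ => h p.1 * r (p.2 - p.1)) (μ.prod volume) := by
  have hmeas : AEStronglyMeasurable (fun p : ℝ × ℝ => h p.1 * r (p.2 - p.1)) (μ.prod volume) :=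
    ((hhm.comp measurable_fst).mul
      (hrm.comp (measurable_snd.sub measurable_fst))).aestronglyMeasurable
  rw [integrable_prod_iff hmeas]
  constructor
  · exact Filter.Eventually.of_forall fun x => (hr.comp_sub_right x).const_mul (h x)
  · have heq : (fun x => ∫ y, ‖h x * r (y - x)‖) = fun x => ‖h x‖ * ∫ y, ‖r y‖ := by
      funext x
      simp_rw [norm_mul]
      rw [integral_const_mul, integral_sub_right_eq_self (fun y => ‖r y‖) x]
    rw [heq]
    exact hh.norm.mul_const _

lemma my_integrable_comp_fst {μ ν : Measure ℝ} [IsProbabilityMeasure μ] [IsProbabilityMeasure ν]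
    {f : ℝ → ℝ} (hfm : Measurable f) (hf : Integrable f μ) :
    Integrable (fun p : ℝ × ℝ => f p.1) (μ.prod ν) := by
  rw [integrable_prod_iff (Measurable.aestronglyMeasurable (show Measurable (fun p : ℝ × ℝ => f p.1) from hfm.comp measurable_fst))]
  refine ⟨Filter.Eventually.of_forall fun x => integrable_const (f x), ?_⟩
  have : (fun x => ∫ y, ‖f (x, y).1‖ ∂ν) = fun x => ‖f x‖ := by
    funext x
    simp [integral_const, measure_univ]
  rw [this]
  exact hf.norm

lemma my_integrable_comp_snd {μ ν : Measure ℝ} [IsProbabilityMeasure μ] [IsProbabilityMeasure ν]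
    {f : ℝ → ℝ} (hfm : Measurable f) (hf : Integrable f ν) :
    Integrable (fun p : ℝ × ℝ => f p.2) (μ.prod ν) := by
  rw [integrable_prod_iff (Measurable.aestronglyMeasurable (show Measurable (fun p : ℝ × ℝ => f p.2) from hfm.comp measurable_snd))]
  refine ⟨Filter.Eventually.of_forall fun x => hf, ?_⟩
  have : (fun x : ℝ => ∫ y, ‖f (x, y).2‖ ∂ν) = fun _ => ∫ y, ‖f y‖ ∂ν := rfl
  rw [this]
  exact integrable_const _


/-- For independent Gaussian random variables `ξ ~ N(ξ̄, Σ_ξ)` and `V ~ N(0, 1)` and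
`Y = ξ + V`, the conditional expectation of `ξ` given `σ(Y)` is
`ξ̄ + Σ_ξ (1 + Σ_ξ)⁻¹ (Y − ξ̄)` almost surely. -/
theorem gaussian_conditional_mean
    {Ω : Type*} [MeasureSpace Ω] [IsProbabilityMeasure (ℙ : Measure Ω)]
    (ξ V : Ω → ℝ) (hξm : Measurable ξ) (hVm : Measurable V)
    (hindep : IndepFun ξ V)
    (ξbar : ℝ) (Sξ : NNReal)
    (hξ : Measure.map ξ ℙ = gaussianReal ξbar Sξ)
    (hV : Measure.map V ℙ = gaussianReal 0 1) :
    ℙ[ξ | MeasurableSpace.comap (fun ω => ξ ω + V ω) inferInstance]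
      =ᵐ[ℙ] fun ω => ξbar + (Sξ : ℝ) * (1 + (Sξ : ℝ))⁻¹ * ((ξ ω + V ω) - ξbar) := by
  classical
  set Y : Ω → ℝ := fun ω => ξ ω + V ω with hYdef
  have hYm : Measurable Y := hξm.add hVm
  have hm : MeasurableSpace.comap Y inferInstance ≤ (inferInstance : MeasurableSpace Ω) :=
    hYm.comap_le
  have hξint : Integrable ξ ℙ := by
    have h0 : Integrable (fun x => x) (Measure.map ξ ℙ) := by
      rw [hξ]; exact my_integrable_id_gaussianReal ξbar Sξ
    exact (integrable_map_measure measurable_id.aestronglyMeasurable hξm.aemeasurable).mp h0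
  have hVint : Integrable V ℙ := by
    have h0 : Integrable (fun x => x) (Measure.map V ℙ) := by
      rw [hV]; exact my_integrable_id_gaussianReal 0 1
    exact (integrable_map_measure measurable_id.aestronglyMeasurable hVm.aemeasurable).mp h0
  by_cases hS : Sξ = 0
  · -- degenerate case : ξ is a.s. constant
    have hc0 : ((Sξ : ℝ)) = 0 := by rw [hS]; simp
    have hmap : Measure.map ξ ℙ = Measure.dirac ξbar := by
      rw [hξ, hS, gaussianReal_zero_var]
    have hae : ξ =ᵐ[ℙ] fun _ => ξbar := by
      rw [Filter.EventuallyEq, ae_iff]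
      have hpre : {ω | ¬ ξ ω = ξbar} = ξ ⁻¹' ({ξbar}ᶜ) := rfl
      rw [hpre, ← Measure.map_apply hξm (measurableSet_singleton ξbar).compl, hmap]
      simp
    have h1 := condExp_congr_ae (m := MeasurableSpace.comap Y inferInstance) (μ := ℙ) hae
    rw [condExp_const hm ξbar] at h1
    refine h1.trans (Filter.Eventually.of_forall fun ω => ?_)
    simp [hc0]
  · -- main case
    set c : ℝ := (Sξ : ℝ) * (1 + (Sξ : ℝ))⁻¹ with hc
    set gfn : ℝ → ℝ := fun y => ξbar + c * (y - ξbar) with hgfn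
    have hgfnm : Measurable gfn := by fun_prop
    have hgYint : Integrable (fun ω => gfn (Y ω)) ℙ := by
      have : Integrable (fun ω => ξbar + c * (Y ω - ξbar)) ℙ :=
        (integrable_const ξbar).add (((hξint.add hVint).sub (integrable_const ξbar)).const_mul c)
      exact this
    suffices h : (fun ω => gfn (Y ω)) =ᵐ[ℙ] ℙ[ξ | MeasurableSpace.comap Y inferInstance] by
      exact h.symm
    refine ae_eq_condExp_of_forall_setIntegral_eq hm hξint
      (fun s _ _ => hgYint.integrableOn) (fun s hs _ => ?_) ?_
    swap
    · -- a.e. strong measurability w.r.t. comap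
      have hYm' : Measurable[MeasurableSpace.comap Y inferInstance] Y :=
        measurable_iff_comap_le.mpr le_rfl
      exact StronglyMeasurable.aestronglyMeasurable (Measurable.stronglyMeasurable
        (hgfnm.comp hYm'))
    obtain ⟨B, hB, rfl⟩ := hs
    have hsm0 : MeasurableSet (Y ⁻¹' B) := hYm hB
    set μm : Measure ℝ := gaussianReal ξbar Sξ with hμm
    set νm : Measure ℝ := gaussianReal 0 1 with hνm
    set ind : ℝ → ℝ := Set.indicator B (fun _ => (1:ℝ)) with hind
    have hindm : Measurable ind := measurable_const.indicator hB
    have hindle : ∀ z w : ℝ, |ind z * w| ≤ |w| := by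
      intro z w
      by_cases hz : z ∈ B
      · rw [hind, Set.indicator_of_mem hz, one_mul]
      · rw [hind, Set.indicator_of_notMem hz, zero_mul, abs_zero]
        exact abs_nonneg _
    set F : ℝ × ℝ → ℝ := fun p => ind (p.1 + p.2) * (gfn (p.1 + p.2) - p.1) with hF
    have hFm : Measurable F :=
      (hindm.comp (measurable_fst.add measurable_snd)).mul
        ((hgfnm.comp (measurable_fst.add measurable_snd)).sub measurable_fst)
    have hgfn_lin : ∀ x u : ℝ, gfn (x + u) - x = c * u - (1 - c) * (x - ξbar) := by
      intro x u; rw [hgfn]; ring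
    have hgfn_lin' : ∀ x y : ℝ, gfn y - x = c * (y - x) - (1 - c) * (x - ξbar) := by
      intro x y; rw [hgfn]; ring
    -- integrability of F over the product of the two gaussians
    have hintA : Integrable F (μm.prod νm) := by
      have hG : Integrable (fun p : ℝ × ℝ => |c * p.2| + |(1 - c) * (p.1 - ξbar)|)
          (μm.prod νm) := by
        refine Integrable.add ?_ ?_
        · exact my_integrable_comp_snd ((measurable_id.const_mul c).abs)
            (((my_integrable_id_gaussianReal 0 1).const_mul c).abs)
        · exact my_integrable_comp_fst (((measurable_id.sub measurable_const).const_mul (1 - c)).abs)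
            ((((my_integrable_id_gaussianReal ξbar Sξ).sub
              (integrable_const ξbar)).const_mul (1 - c)).abs)
      refine Integrable.mono' hG hFm.aestronglyMeasurable
        (Filter.Eventually.of_forall fun p => ?_)
      rw [Real.norm_eq_abs, hF]
      calc |ind (p.1 + p.2) * (gfn (p.1 + p.2) - p.1)| ≤ |gfn (p.1 + p.2) - p.1| :=
            hindle _ _
        _ = |c * p.2 - (1 - c) * (p.1 - ξbar)| := by rw [hgfn_lin]
        _ ≤ |c * p.2| + |(1 - c) * (p.1 - ξbar)| := abs_sub _ _
    set K : ℝ → ℝ → ℝ := fun x y => gaussianPDFReal 0 1 (y - x) * (ind y * (gfn y - x))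
      with hK
    have hKm : Measurable (Function.uncurry K) := by
      refine Measurable.mul ?_ ?_
      · exact (measurable_gaussianPDFReal 0 1).comp (measurable_snd.sub measurable_fst)
      · exact (hindm.comp measurable_snd).mul
          ((hgfnm.comp measurable_snd).sub measurable_fst)
    have hintB : Integrable (Function.uncurry K) (μm.prod volume) := by
      have hr1 : Integrable (fun u : ℝ => |u| * gaussianPDFReal 0 1 u) volume := by
        refine (my_integrable_pdf_mul 0 one_ne_zero).abs.congr
          (Filter.Eventually.of_forall fun u => ?_)
        show |u * gaussianPDFReal 0 1 u| = |u| * gaussianPDFReal 0 1 u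
        rw [abs_mul, abs_of_nonneg (gaussianPDFReal_nonneg _ _ _)]
      have s1 : Integrable (fun p : ℝ × ℝ => |c| * (|p.2 - p.1| * gaussianPDFReal 0 1 (p.2 - p.1)))
          (μm.prod volume) :=
        my_integrable_shear measurable_const (integrable_const _)
          (measurable_abs.mul (measurable_gaussianPDFReal 0 1)) hr1
      have s2 : Integrable
          (fun p : ℝ × ℝ => (|1 - c| * |p.1 - ξbar|) * gaussianPDFReal 0 1 (p.2 - p.1))
          (μm.prod volume) :=
        my_integrable_shear (((measurable_id.sub measurable_const).abs).const_mul (|1 - c|))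
          ((((my_integrable_id_gaussianReal ξbar Sξ).sub
            (integrable_const ξbar)).abs).const_mul (|1 - c|))
          (measurable_gaussianPDFReal 0 1) (integrable_gaussianPDFReal 0 1)
      refine Integrable.mono' (s1.add s2) hKm.aestronglyMeasurable
        (Filter.Eventually.of_forall fun p => ?_)
      rw [Real.norm_eq_abs, Function.uncurry, hK]
      have hpd : (0:ℝ) ≤ gaussianPDFReal 0 1 (p.2 - p.1) := gaussianPDFReal_nonneg _ _ _
      calc |gaussianPDFReal 0 1 (p.2 - p.1) * (ind p.2 * (gfn p.2 - p.1))|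
          = gaussianPDFReal 0 1 (p.2 - p.1) * |ind p.2 * (gfn p.2 - p.1)| := by
            rw [abs_mul, abs_of_nonneg hpd]
        _ ≤ gaussianPDFReal 0 1 (p.2 - p.1) * |gfn p.2 - p.1| := by
            exact mul_le_mul_of_nonneg_left (hindle _ _) hpd
        _ ≤ gaussianPDFReal 0 1 (p.2 - p.1) * (|c * (p.2 - p.1)| + |(1 - c) * (p.1 - ξbar)|) := by
            refine mul_le_mul_of_nonneg_left ?_ hpd
            rw [hgfn_lin']
            exact abs_sub _ _
        _ ≤ |c| * (|p.2 - p.1| * gaussianPDFReal 0 1 (p.2 - p.1)) +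
              (|1 - c| * |p.1 - ξbar|) * gaussianPDFReal 0 1 (p.2 - p.1) := by
            refine le_of_eq ?_
            rw [abs_mul c (p.2 - p.1), abs_mul (1 - c) (p.1 - ξbar)]; ring
    -- the set-integral identity
    rw [← sub_eq_zero, ← integral_sub hgYint.integrableOn hξint.integrableOn,
      ← integral_indicator hsm0]
    have hindeq : (Y ⁻¹' B).indicator (fun ω => gfn (Y ω) - ξ ω)
        = fun ω => F (ξ ω, V ω) := by
      funext ω
      simp only [hF, hind]
      by_cases h : ξ ω + V ω ∈ B
      · rw [Set.indicator_of_mem (show ω ∈ Y ⁻¹' B from h), Set.indicator_of_mem h, one_mul]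
      · rw [Set.indicator_of_notMem (show ω ∉ Y ⁻¹' B from h), Set.indicator_of_notMem h,
          zero_mul]
    rw [hindeq]
    have hmap : Measure.map (fun ω => (ξ ω, V ω)) ℙ = μm.prod νm := by
      rw [← hξ, ← hV]
      exact (indepFun_iff_map_prod_eq_prod_map_map hξm.aemeasurable hVm.aemeasurable).mp hindep
    have step1 : ∫ ω, F (ξ ω, V ω) ∂ℙ = ∫ p, F p ∂(μm.prod νm) := by
      rw [← hmap, integral_map (hξm.prodMk hVm).aemeasurable hFm.aestronglyMeasurable]
    rw [step1, integral_prod F hintA]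
    have inner1 : ∀ x : ℝ, (∫ v, F (x, v) ∂νm) = ∫ y, K x y := by
      intro x
      rw [hνm, my_integral_gaussianReal one_ne_zero (fun v => F (x, v))]
      rw [← integral_sub_right_eq_self (fun v => gaussianPDFReal 0 1 v * F (x, v)) x]
      refine integral_congr_ae (Filter.Eventually.of_forall fun y => ?_)
      simp only [hK, hF]
      have hxy : x + (y - x) = y := by ring
      rw [hxy]
    simp_rw [inner1]
    rw [integral_integral_swap hintB]
    have inner2 : ∀ y : ℝ, (∫ x, K x y ∂μm) = 0 := by
      intro y
      rw [hμm, my_integral_gaussianReal hS (fun x => K x y)]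
      have hpull : ∀ x : ℝ, gaussianPDFReal ξbar Sξ x * K x y
          = ind y * (gaussianPDFReal ξbar Sξ x *
            (gaussianPDFReal 0 1 (y - x) * (ξbar + (Sξ : ℝ) * (1 + (Sξ : ℝ))⁻¹ * (y - ξbar) - x))) := by
        intro x
        simp only [hK, hgfn, hc]
        ring
      simp_rw [hpull]
      rw [integral_const_mul, my_core ξbar hS y, mul_zero]
    simp_rw [inner2]
    simp
end
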